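/- If R is a ring such that R^n is contained in the Wedderburn radical W(R) (the sum of all nilpotent ideals of R) for some n ≥ 1, then R is locally nilpotent: every finitely generated subring of R is nilpotent. -/

import Mathlib

/-- The product `g 0 * g 1 * ⋯ * g n` of `n + 1` elements of a possibly non-unital ring. -/
def finProd {R : Type*} [Mul R] {n : ℕ} (g : Fin (n + 1) → R) : R :=
  (List.ofFn fun i : Fin n => g i.succ).foldl (· * ·) (g 0)

namespace LocNilpAux

set_option linter.unusedSectionVars false

variable {R : Type*} [NonUnitalRing R]

/-- Product of a list, with junk value `0` for the empty list. -/
def lp : List R → R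
  | [] => 0
  | a :: t => t.foldl (· * ·) a

lemma foldl_mul (l : List R) : ∀ a b : R, l.foldl (· * ·) (a * b) = a * l.foldl (· * ·) b := by
  induction l with
  | nil => intro a b; rfl
  | cons c t ih =>
    intro a b
    show t.foldl (· * ·) (a * b * c) = a * t.foldl (· * ·) (b * c)
    rw [mul_assoc, ih]

lemma foldl_zero (l : List R) : l.foldl (· * ·) 0 = 0 := by
  induction l with
  | nil => rfl
  | cons c t ih => show t.foldl (· * ·) (0 * c) = 0; rw [zero_mul, ih]

lemma lp_cons (a : R) {l : List R} (h : l ≠ []) : lp (a :: l) = a * lp l := by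
  cases l with
  | nil => exact absurd rfl h
  | cons b t => show t.foldl (· * ·) (a * b) = a * t.foldl (· * ·) b; exact foldl_mul t a b

lemma lp_append {l₁ l₂ : List R} (h₁ : l₁ ≠ []) (h₂ : l₂ ≠ []) :
    lp (l₁ ++ l₂) = lp l₁ * lp l₂ := by
  cases l₁ with
  | nil => exact absurd rfl h₁
  | cons a t =>
    cases l₂ with
    | nil => exact absurd rfl h₂
    | cons b u =>
      show (t ++ b :: u).foldl (· * ·) a = _
      rw [List.foldl_append]
      show u.foldl (· * ·) (t.foldl (· * ·) a * b) = _
      rw [foldl_mul]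
      rfl

lemma finProd_eq_lp {m : ℕ} (g : Fin (m + 1) → R) : finProd g = lp (List.ofFn g) := by
  rw [List.ofFn_succ]
  rfl

lemma exists_ofFn {m : ℕ} (l : List R) (h : l.length = m + 1) :
    ∃ g : Fin (m + 1) → R, List.ofFn g = l := by
  refine ⟨fun i => l.getD i 0, ?_⟩
  apply List.ext_getElem
  · simp [h]
  · intro i h1 h2
    simp only [List.getElem_ofFn]
    exact List.getD_eq_getElem l 0 h2

/-- `m`-step nilpotency of a set: all products of `m+1` elements vanish. -/
def Nilpm (S : Set R) (m : ℕ) : Prop :=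
  ∀ l : List R, l.length = m + 1 → (∀ x ∈ l, x ∈ S) → lp l = 0

lemma nilpm_of_fin {I : TwoSidedIdeal R} {m : ℕ}
    (h : ∀ g : Fin (m + 1) → R, (∀ i, g i ∈ I) → finProd g = 0) :
    Nilpm (I : Set R) m := by
  intro l hl hmem
  obtain ⟨g, hg⟩ := exists_ofFn l hl
  rw [← hg, ← finProd_eq_lp]
  exact h g fun i => hmem _ (hg ▸ (List.mem_ofFn (f := g) (a := g i)).2 ⟨i, rfl⟩)

lemma lp_cons_zero (v : List R) : lp ((0 : R) :: v) = 0 := by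
  show v.foldl (· * ·) 0 = 0; exact foldl_zero v

lemma lp_cons_add (x y : R) (v : List R) : lp ((x + y) :: v) = lp (x :: v) + lp (y :: v) := by
  cases v with
  | nil => rfl
  | cons b u =>
    have h1 := lp_cons (x + y) (l := b :: u) (by simp)
    have h2 := lp_cons x (l := b :: u) (by simp)
    have h3 := lp_cons y (l := b :: u) (by simp)
    rw [h1, h2, h3, add_mul]

lemma lp_cons_neg (x : R) (v : List R) : lp ((-x) :: v) = -lp (x :: v) := by
  cases v with
  | nil => rfl
  | cons b u =>
    have h1 := lp_cons (-x) (l := b :: u) (by simp)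
    have h2 := lp_cons x (l := b :: u) (by simp)
    rw [h1, h2, neg_mul]

lemma lp_zero_slot (u v : List R) : lp (u ++ (0 : R) :: v) = 0 := by
  cases u with
  | nil => exact lp_cons_zero v
  | cons a t =>
    rw [lp_append (by simp) (by simp), lp_cons_zero, mul_zero]

lemma lp_add_slot (u v : List R) (x y : R) :
    lp (u ++ (x + y) :: v) = lp (u ++ x :: v) + lp (u ++ y :: v) := by
  cases u with
  | nil => exact lp_cons_add x y v
  | cons a t =>
    rw [lp_append (by simp) (by simp), lp_append (by simp) (by simp),
      lp_append (by simp) (by simp), lp_cons_add, mul_add]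

lemma lp_neg_slot (u v : List R) (x : R) : lp (u ++ (-x) :: v) = -lp (u ++ x :: v) := by
  cases u with
  | nil => exact lp_cons_neg x v
  | cons a t =>
    rw [lp_append (by simp) (by simp), lp_append (by simp) (by simp), lp_cons_neg, mul_neg]

/-- Replacement lemma: if all products of `L` elements of `S` lie in an ideal `J`, then so do
all products of `L` elements of the additive subgroup generated by `S`. -/
lemma repl {S : Set R} {J : TwoSidedIdeal R} {L : ℕ}
    (h : ∀ l : List R, l.length = L → (∀ x ∈ l, x ∈ S) → lp l ∈ J) :
    ∀ l : List R, l.length = L → (∀ x ∈ l, x ∈ AddSubgroup.closure S) → lp l ∈ J := by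
  suffices H : ∀ (v u : List R), (∀ x ∈ u, x ∈ S) → (∀ x ∈ v, x ∈ AddSubgroup.closure S) →
      (u ++ v).length = L → lp (u ++ v) ∈ J by
    intro l hl hmem
    exact H l [] (by simp) hmem (by simpa using hl)
  intro v
  induction v with
  | nil =>
    intro u hu _ hlen
    rw [List.append_nil] at hlen ⊢
    exact h u hlen hu
  | cons x v ih =>
    intro u hu hv hlen
    have hx : x ∈ AddSubgroup.closure S := hv x (by simp)
    have hv' : ∀ z ∈ v, z ∈ AddSubgroup.closure S := fun z hz => hv z (by simp [hz])
    have hlen' : u.length + v.length + 1 = L := by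
      simp only [List.length_append, List.length_cons] at hlen; omega
    clear hv hlen
    induction hx using AddSubgroup.closure_induction with
    | mem y hy =>
      have heq : u ++ y :: v = (u ++ [y]) ++ v := by simp
      rw [heq]
      refine ih (u ++ [y]) ?_ hv' ?_
      · intro z hz
        rcases List.mem_append.1 hz with h' | h'
        · exact hu z h'
        · simp at h'; subst h'; exact hy
      · simp only [List.length_append, List.length_cons, List.length_nil]; omega
    | zero => rw [lp_zero_slot]; exact TwoSidedIdeal.zero_mem J
    | add a b ha hb pa pb => rw [lp_add_slot]; exact TwoSidedIdeal.add_mem J pa pb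
    | neg a ha pa => rw [lp_neg_slot]; exact TwoSidedIdeal.neg_mem J pa

open Classical in
/-- Number of entries of `l` satisfying `p` (classical). -/
noncomputable def cnt (p : R → Prop) : List R → ℕ
  | [] => 0
  | a :: t => (if p a then 1 else 0) + cnt p t

lemma cnt_append (p : R → Prop) (l₁ l₂ : List R) :
    cnt p (l₁ ++ l₂) = cnt p l₁ + cnt p l₂ := by
  induction l₁ with
  | nil => simp [cnt]
  | cons a t ih => simp [cnt, ih]; omega

lemma cnt_pos_ne_nil {p : R → Prop} {l : List R} (h : 0 < cnt p l) : l ≠ [] := by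
  intro h'; subst h'; simp [cnt] at h

lemma length_le_cnt_add_cnt {p q : R → Prop} {l : List R} (h : ∀ x ∈ l, p x ∨ q x) :
    l.length ≤ cnt p l + cnt q l := by
  induction l with
  | nil => simp
  | cons a t ih =>
    have := ih fun x hx => h x (by simp [hx])
    rcases h a (by simp) with ha | ha <;> simp [cnt, ha] <;> omega

/-- Absorption: a product of elements of which at least `k+1` lie in a two-sided ideal `I`
is (up to a right factor) a product of `k+1` elements of `I`. -/
lemma absorb (I : TwoSidedIdeal R) (l : List R) : ∀ k : ℕ,
    k + 1 ≤ cnt (fun x => x ∈ I) l →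
    ∃ m : List R, m.length = k + 1 ∧ (∀ x ∈ m, x ∈ I) ∧
      (lp l = lp m ∨ ∃ c, lp l = lp m * c) := by
  induction l using List.reverseRecOn with
  | nil => intro k hk; simp [cnt] at hk
  | append_singleton l' x ih =>
    intro k hk
    rw [cnt_append] at hk
    by_cases hx : x ∈ I
    · have hx1 : cnt (fun x => x ∈ I) [x] = 1 := by simp [cnt, hx]
      rw [hx1] at hk
      cases k with
      | zero =>
        rcases eq_or_ne l' [] with rfl | hl'
        · exact ⟨[x], rfl, by simpa using hx, Or.inl (by simp)⟩
        · refine ⟨[lp l' * x], rfl, by simpa using I.mul_mem_left _ _ hx, Or.inl ?_⟩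
          rw [lp_append hl' (by simp)]
          rfl
      | succ k' =>
        have hl'cnt : k' + 1 ≤ cnt (fun x => x ∈ I) l' := by omega
        have hl' : l' ≠ [] := cnt_pos_ne_nil (p := fun x => x ∈ I) (by omega)
        obtain ⟨m, hmlen, hmI, hm⟩ := ih k' hl'cnt
        have hmne : m ≠ [] := by intro h; rw [h] at hmlen; simp at hmlen
        rcases hm with hm | ⟨c, hm⟩
        · refine ⟨m ++ [x], by simp [hmlen], ?_, Or.inl ?_⟩
          · intro z hz; rcases List.mem_append.1 hz with h | h
            · exact hmI z h
            · simp at h; subst h; exact hx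
          · rw [lp_append hl' (by simp), lp_append hmne (by simp), hm]
        · refine ⟨m ++ [c * x], by simp [hmlen], ?_, Or.inl ?_⟩
          · intro z hz; rcases List.mem_append.1 hz with h | h
            · exact hmI z h
            · simp at h; subst h; exact I.mul_mem_left _ _ hx
          · rw [lp_append hl' (by simp), lp_append hmne (by simp), hm]
            show lp m * c * x = lp m * (c * x)
            rw [mul_assoc]
    · have hx1 : cnt (fun x => x ∈ I) [x] = 0 := by simp [cnt, hx]
      rw [hx1] at hk
      have hl' : l' ≠ [] := cnt_pos_ne_nil (p := fun x => x ∈ I) (by omega)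
      obtain ⟨m, hmlen, hmI, hm⟩ := ih k (by omega)
      rcases hm with hm | ⟨c, hm⟩
      · refine ⟨m, hmlen, hmI, Or.inr ⟨x, ?_⟩⟩
        rw [lp_append hl' (by simp), hm]; rfl
      · refine ⟨m, hmlen, hmI, Or.inr ⟨c * x, ?_⟩⟩
        rw [lp_append hl' (by simp), hm]
        show lp m * c * x = lp m * (c * x)
        rw [mul_assoc]

/-- A product with at least `k+1` factors in a `k`-nilpotent ideal vanishes. -/
lemma lp_eq_zero_of_cnt {I : TwoSidedIdeal R} {k : ℕ} (hI : Nilpm (I : Set R) k)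
    (l : List R) (h : k + 1 ≤ cnt (fun x => x ∈ I) l) : lp l = 0 := by
  obtain ⟨m, hmlen, hmI, hm⟩ := absorb I l k h
  have : lp m = 0 := hI m hmlen hmI
  rcases hm with hm | ⟨c, hm⟩ <;> rw [hm, this] <;> simp

lemma nilpm_sup {I J : TwoSidedIdeal R} {a b : ℕ}
    (hI : Nilpm (I : Set R) a) (hJ : Nilpm (J : Set R) b) :
    Nilpm ((I ⊔ J : TwoSidedIdeal R) : Set R) (a + b + 1) := by
  have hunion : ∀ l : List R, l.length = a + b + 2 →
      (∀ x ∈ l, x ∈ (I : Set R) ∪ (J : Set R)) → lp l ∈ (⊥ : TwoSidedIdeal R) := by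
    intro l hl hmem
    rw [TwoSidedIdeal.mem_bot]
    have hcnt := length_le_cnt_add_cnt (p := fun x => x ∈ I) (q := fun x => x ∈ J)
      (l := l) (fun x hx => hmem x hx)
    rw [hl] at hcnt
    rcases le_or_gt (a + 1) (cnt (fun x => x ∈ I) l) with h | h
    · exact lp_eq_zero_of_cnt hI l h
    · exact lp_eq_zero_of_cnt hJ l (by omega)
  intro l hl hmem
  rw [← TwoSidedIdeal.mem_bot (x := lp l)]
  refine repl hunion l (by omega) ?_
  intro x hx
  obtain ⟨y, hy, z, hz, hyz⟩ := TwoSidedIdeal.mem_sup.1 (hmem x hx)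
  rw [← hyz]
  exact add_mem (AddSubgroup.subset_closure (Or.inl hy)) (AddSubgroup.subset_closure (Or.inr hz))

lemma nilpm_bot : Nilpm ((⊥ : TwoSidedIdeal R) : Set R) 0 := by
  intro l hl hmem
  match l, hl with
  | [x], _ =>
    have : x = 0 := by simpa using (TwoSidedIdeal.mem_bot R).1 (hmem x (by simp))
    simp [lp, this]

/-- The set of elements lying in some nilpotent two-sided ideal, as a two-sided ideal. -/
def nilpElems : TwoSidedIdeal R :=
  TwoSidedIdeal.mk' {x : R | ∃ I : TwoSidedIdeal R, (∃ m, Nilpm (I : Set R) m) ∧ x ∈ I}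
    ⟨⊥, ⟨0, nilpm_bot⟩, zero_mem _⟩
    (fun {x y} ⟨I, ⟨mI, hI⟩, hxI⟩ ⟨J, ⟨mJ, hJ⟩, hyJ⟩ =>
      ⟨I ⊔ J, ⟨mI + mJ + 1, nilpm_sup hI hJ⟩,
        add_mem ((le_sup_left : I ≤ I ⊔ J) hxI) ((le_sup_right : J ≤ I ⊔ J) hyJ)⟩)
    (fun {x} ⟨I, hI, hxI⟩ => ⟨I, hI, neg_mem hxI⟩)
    (fun {x y} ⟨I, hI, hyI⟩ => ⟨I, hI, I.mul_mem_left _ _ hyI⟩)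
    (fun {x y} ⟨I, hI, hxI⟩ => ⟨I, hI, I.mul_mem_right _ _ hxI⟩)

lemma mem_nilpElems {x : R} :
    x ∈ (nilpElems : TwoSidedIdeal R) ↔
      ∃ I : TwoSidedIdeal R, (∃ m, Nilpm (I : Set R) m) ∧ x ∈ I :=
  TwoSidedIdeal.mem_mk' _ _ _ _ _ _ x

lemma sSup_le_nilpElems :
    sSup {I : TwoSidedIdeal R | ∃ m : ℕ,
        ∀ g' : Fin (m + 1) → R, (∀ i, g' i ∈ I) → finProd g' = 0} ≤ nilpElems := by
  refine sSup_le fun I hI => ?_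
  obtain ⟨m, hm⟩ := hI
  intro x hx
  exact mem_nilpElems.2 ⟨I, ⟨m, nilpm_of_fin hm⟩, hx⟩

/-- Finitely many elements of `nilpElems` lie in a common nilpotent ideal. -/
lemma exists_common_ideal {F : Set R} (hF : F.Finite)
    (h : ∀ x ∈ F, x ∈ (nilpElems : TwoSidedIdeal R)) :
    ∃ J : TwoSidedIdeal R, (∃ M, Nilpm (J : Set R) M) ∧ F ⊆ (J : Set R) := by
  revert h
  refine Set.Finite.induction_on
    (motive := fun F _ => (∀ x ∈ F, x ∈ (nilpElems : TwoSidedIdeal R)) →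
      ∃ J : TwoSidedIdeal R, (∃ M, Nilpm (J : Set R) M) ∧ F ⊆ (J : Set R)) F hF
    (fun _ => ⟨⊥, ⟨0, nilpm_bot⟩, by simp⟩) ?_
  intro a F ha hFfin ih h
  obtain ⟨J, ⟨M, hJ⟩, hFJ⟩ := ih fun x hx => h x (Set.mem_insert_of_mem a hx)
  obtain ⟨I, ⟨m, hI⟩, haI⟩ := mem_nilpElems.1 (h a (Set.mem_insert a F))
  refine ⟨I ⊔ J, ⟨m + M + 1, nilpm_sup hI hJ⟩, ?_⟩
  intro x hx
  rcases Set.mem_insert_iff.1 hx with rfl | hx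
  · exact (le_sup_left : I ≤ I ⊔ J) haI
  · exact (le_sup_right : J ≤ I ⊔ J) (hFJ hx)

lemma length_flatten_ge {ls : List (List R)} (h : ∀ c ∈ ls, c ≠ []) :
    ls.length ≤ ls.flatten.length := by
  induction ls with
  | nil => simp
  | cons c ls ih =>
    have hc : c ≠ [] := h c (by simp)
    have : 1 ≤ c.length := List.length_pos_iff.2 hc
    have := ih fun d hd => h d (by simp [hd])
    simp only [List.flatten_cons, List.length_append, List.length_cons]
    omega

lemma flatten_ne_nil_aux {ls : List (List R)} (hne : ls ≠ []) (h : ∀ c ∈ ls, c ≠ []) :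
    ls.flatten ≠ [] := by
  have h1 : 1 ≤ ls.length := List.length_pos_iff.2 hne
  have := length_flatten_ge h
  intro hj
  rw [hj] at this
  simp only [List.length_nil, Nat.le_zero] at this
  omega

lemma lp_join (ls : List (List R)) (h : ∀ c ∈ ls, c ≠ []) :
    lp ls.flatten = lp (ls.map lp) := by
  induction ls with
  | nil => rfl
  | cons c ls ih =>
    have hc : c ≠ [] := h c (by simp)
    have hls : ∀ d ∈ ls, d ≠ [] := fun d hd => h d (by simp [hd])
    rcases eq_or_ne ls [] with rfl | hne
    · simp [lp]
    · have hflat : ls.flatten ≠ [] := flatten_ne_nil_aux hne hls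
      have hmap : ls.map lp ≠ [] := by simpa using hne
      rw [List.flatten_cons, lp_append hc hflat, ih hls, List.map_cons, lp_cons _ hmap]

/-- Every element of the semigroup closure of `s` is the product of a nonempty list from `s`. -/
lemma sgp_closure_rep {s : Set R} {x : R} (hx : x ∈ Subsemigroup.closure s) :
    ∃ l : List R, l ≠ [] ∧ (∀ y ∈ l, y ∈ s) ∧ x = lp l := by
  induction hx using Subsemigroup.closure_induction with
  | mem y hy => exact ⟨[y], by simp, by simpa using hy, rfl⟩
  | mul a b ha hb pa pb =>
    obtain ⟨l₁, h1, hm1, rfl⟩ := pa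
    obtain ⟨l₂, h2, hm2, rfl⟩ := pb
    refine ⟨l₁ ++ l₂, by simp [h1], ?_, (lp_append h1 h2).symm⟩
    intro y hy
    rcases List.mem_append.1 hy with h | h
    · exact hm1 y h
    · exact hm2 y h

/-- Chunk a list of length `(n+1) * (M+1)` into `M+1` blocks of length `n+1`. -/
lemma exists_chunks (n : ℕ) : ∀ (M : ℕ) (l : List R), l.length = (n + 1) * (M + 1) →
    ∃ ls : List (List R), ls.flatten = l ∧ ls.length = M + 1 ∧ ∀ c ∈ ls, c.length = n + 1 := by
  intro M
  induction M with
  | zero =>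
    intro l hl
    exact ⟨[l], by simp, rfl, by simpa using by simpa using hl⟩
  | succ M ih =>
    intro l hl
    have hlen : (l.take (n + 1)).length = n + 1 := by
      rw [List.length_take]
      have : n + 1 ≤ l.length := by rw [hl]; nlinarith
      omega
    have hdrop : (l.drop (n + 1)).length = (n + 1) * (M + 1) := by
      rw [List.length_drop, hl]; ring_nf; omega
    obtain ⟨ls, hflat, hlslen, hc⟩ := ih (l.drop (n + 1)) hdrop
    refine ⟨l.take (n + 1) :: ls, ?_, by simp [hlslen], ?_⟩
    · simp [hflat]
    · intro c hcmem
      rcases List.mem_cons.1 hcmem with rfl | h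
      · exact hlen
      · exact hc c h

end LocNilpAux

open LocNilpAux in
/-- If `R` is a (possibly non-unital) ring such that `R ^ (n+1)` is contained in the Wedderburn
radical of `R` (the sum of all nilpotent two-sided ideals), then `R` is locally nilpotent: every
finitely generated subring of `R` is nilpotent. -/
theorem stmt12 {R : Type*} [NonUnitalRing R] (n : ℕ)
    (hW : ∀ g : Fin (n + 1) → R, finProd g ∈
      sSup {I : TwoSidedIdeal R | ∃ m : ℕ,
        ∀ g' : Fin (m + 1) → R, (∀ i, g' i ∈ I) → finProd g' = 0}) :
    ∀ s : Finset R, ∃ m : ℕ, ∀ g : Fin (m + 1) → R,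
      (∀ i, g i ∈ NonUnitalSubring.closure (s : Set R)) → finProd g = 0 := by
  intro s
  have hW' : ∀ g : Fin (n + 1) → R, finProd g ∈ (nilpElems : TwoSidedIdeal R) :=
    fun g => sSup_le_nilpElems (hW g)
  -- the finitely many products of `n+1` elements of `s`
  set F : Set R := Set.range (fun f : Fin (n + 1) → {x // x ∈ s} =>
    finProd fun i => ((f i : R))) with hF
  have hFfin : F.Finite := Set.finite_range _
  obtain ⟨J, ⟨M, hJ⟩, hFJ⟩ := exists_common_ideal hFfin (by
    rintro x ⟨f, rfl⟩
    exact hW' _)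
  -- products of `n+1` elements of `s` lie in `J`
  have hsl : ∀ l : List R, l.length = n + 1 → (∀ x ∈ l, x ∈ (s : Set R)) → lp l ∈ J := by
    intro l hl hmem
    obtain ⟨g, hg⟩ := exists_ofFn l hl
    rw [← hg, ← finProd_eq_lp]
    apply hFJ
    exact ⟨fun i => ⟨g i, hmem _ (hg ▸ (List.mem_ofFn (f := g) (a := g i)).2 ⟨i, rfl⟩)⟩, rfl⟩
  -- products of at least `n+1` elements of `s` lie in `J`
  have hsl' : ∀ l : List R, n + 1 ≤ l.length → (∀ x ∈ l, x ∈ (s : Set R)) → lp l ∈ J := by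
    intro l hl hmem
    have htake : lp (l.take (n + 1)) ∈ J :=
      hsl _ (by rw [List.length_take]; omega) fun x hx => hmem x (List.mem_of_mem_take hx)
    have hsplit : l.take (n + 1) ++ l.drop (n + 1) = l := List.take_append_drop _ _
    have htne : l.take (n + 1) ≠ [] := by
      have hlt : (l.take (n + 1)).length = n + 1 := by rw [List.length_take]; omega
      intro h
      rw [h] at hlt
      simp at hlt
    rcases eq_or_ne (l.drop (n + 1)) [] with hd | hd
    · rw [hd, List.append_nil] at hsplit
      rw [← hsplit]
      exact htake
    · rw [← hsplit, lp_append htne hd]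
      exact J.mul_mem_right _ _ htake
  -- products of `n+1` elements of the semigroup closure of `s` lie in `J`
  have hsg : ∀ l : List R, l.length = n + 1 →
      (∀ x ∈ l, x ∈ Subsemigroup.closure (s : Set R)) → lp l ∈ J := by
    intro l hl hmem
    have hrep : ∃ ls : List (List R), l = ls.map lp ∧
        ∀ c ∈ ls, c ≠ [] ∧ ∀ y ∈ c, y ∈ (s : Set R) := by
      clear hl
      induction l with
      | nil => exact ⟨[], rfl, by simp⟩
      | cons a t ih =>
        obtain ⟨ls, hls, hc⟩ := ih fun x hx => hmem x (by simp [hx])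
        obtain ⟨c, hcne, hcmem, hceq⟩ := sgp_closure_rep (hmem a (by simp))
        exact ⟨c :: ls, by simp [hls, ← hceq], by
          intro d hd
          rcases List.mem_cons.1 hd with rfl | hd
          · exact ⟨hcne, hcmem⟩
          · exact hc d hd⟩
    obtain ⟨ls, rfl, hc⟩ := hrep
    rw [← lp_join ls fun c hcm => (hc c hcm).1]
    refine hsl' _ ?_ ?_
    · have h1 := length_flatten_ge (ls := ls) fun c hcm => (hc c hcm).1
      have h2 : ls.length = n + 1 := by simpa using hl
      omega
    · intro x hx
      obtain ⟨c, hcm, hxc⟩ := List.mem_flatten.1 hx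
      exact (hc c hcm).2 x hxc
  -- products of `n+1` elements of the subring closure of `s` lie in `J`
  have hac := repl hsg
  refine ⟨n + (n + 1) * M, ?_⟩
  intro g hg
  rw [finProd_eq_lp]
  have hlen : (List.ofFn g).length = (n + 1) * (M + 1) := by
    simp only [List.length_ofFn]
    ring
  obtain ⟨ls, hflat, hlslen, hclen⟩ := exists_chunks n M (List.ofFn g) hlen
  have hchunkne : ∀ c ∈ ls, c ≠ [] := by
    intro c hc h
    have := hclen c hc
    rw [h] at this
    simp at this
  have hstep : lp (List.ofFn g) = lp (ls.map lp) := by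
    rw [← hflat]
    exact lp_join ls hchunkne
  rw [hstep]
  refine hJ (ls.map lp) (by simp [hlslen]) ?_
  intro x hx
  obtain ⟨c, hcm, rfl⟩ := List.mem_map.1 hx
  refine hac c (hclen c hcm) ?_
  intro y hy
  have hyl : y ∈ List.ofFn g := hflat ▸ List.mem_flatten.2 ⟨c, hcm, hy⟩
  obtain ⟨i, rfl⟩ := (List.mem_ofFn (f := g) (a := y)).1 hyl
  exact NonUnitalSubring.mem_closure_iff.1 (hg i)
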